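/- arXiv:1604.00616 — 6 statements merged into one kernel-verified Lean document; each statement's English description precedes it below -/
import Mathlib

section
/- Let f : ℝ^d → ℂ be any function and let h_1, ..., h_s ∈ ℝ^d. Suppose for each i = 1, ..., s there is a natural number n_i ≥ 1 with dim span{f, τ_{h_i}(f), ..., (τ_{h_i})^{n_i}(f)} ≤ n_i. Then for every (m_1, ..., m_s) ∈ ℤ^s the translate τ_{m_1 h_1 + ... + m_s h_s}(f) belongs to the finite-dimensional space W = span{ (τ_{h_1})^{a_1}(τ_{h_2})^{a_2} ⋯ (τ_{h_s})^{a_s}(f) : 0 ≤ a_i < n_i, i = 1, ..., s }. In particular, the span of all translates τ_g(f) with g in the subgroup h_1ℤ + ... + h_sℤ has dimension at most n_1 n_2 ⋯ n_s. -/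
open scoped BigOperators
open scoped Cardinal

noncomputable def tau (d : ℕ) (v : Fin d → ℝ) :
    ((Fin d → ℝ) → ℂ) ≃ₗ[ℂ] ((Fin d → ℝ) → ℂ) where
  toFun g := fun x => g (x + v)
  invFun g := fun x => g (x - v)
  map_add' _ _ := rfl
  map_smul' _ _ := rfl
  left_inv g := by funext x; simp
  right_inv g := by funext x; simp

lemma auxA {d : ℕ} (f : (Fin d → ℝ) → ℂ) (v : Fin d → ℝ) (n : ℕ) (hn : 1 ≤ n)
    (hdim : Module.rank ℂ ↥(Submodule.span ℂ
      (Set.range fun k : Fin (n + 1) => fun x : Fin d → ℝ => f (x + (k : ℕ) • v))) ≤ n)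
    (m : ℤ) :
    (fun x : Fin d → ℝ => f (x + m • v)) ∈
      Submodule.span ℂ (Set.range fun a : Fin n => fun x : Fin d → ℝ => f (x + (a : ℕ) • v)) := by
  by_cases hf : f = 0
  · subst hf
    exact Submodule.zero_mem _
  -- the chain of spans
  set V : ℕ → Submodule ℂ ((Fin d → ℝ) → ℂ) := fun k =>
    Submodule.span ℂ (Set.range fun a : Fin (k + 1) => fun x : Fin d → ℝ => f (x + (a : ℕ) • v))
    with hV
  haveI : ∀ k, FiniteDimensional ℂ (V k) := fun k =>
    FiniteDimensional.span_of_finite ℂ (Set.finite_range _)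
  have hmono : ∀ k, V k ≤ V (k + 1) := by
    intro k
    apply Submodule.span_mono
    rintro - ⟨a, rfl⟩
    exact ⟨a.castSucc, rfl⟩
  have hmap : ∀ k, Submodule.map (tau d v).toLinearMap (V k) ≤ V (k + 1) := by
    intro k
    rw [Submodule.map_span, Submodule.span_le]
    rintro - ⟨-, ⟨a, rfl⟩, rfl⟩
    apply Submodule.subset_span
    refine ⟨a.succ, ?_⟩
    funext x
    show f (x + ((a : ℕ) + 1) • v) = f (x + v + (a : ℕ) • v)
    congr 1
    module
  have hVn : Module.finrank ℂ (V n) ≤ n := by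
    have := hdim
    rw [← Module.finrank_eq_rank] at this
    exact_mod_cast this
  -- find a stabilization point
  have hstab : ∃ k, k < n ∧ V (k + 1) = V k := by
    by_contra hc
    push_neg at hc
    have hlt : ∀ k, k < n → V k < V (k + 1) := by
      intro k hk
      exact lt_of_le_of_ne (hmono k) (fun e => hc k hk e.symm)
    have key : ∀ k, k ≤ n → k + Module.finrank ℂ (V 0) ≤ Module.finrank ℂ (V k) := by
      intro k
      induction k with
      | zero => intro _; simp
      | succ k ih =>
        intro hk
        have h1 := ih (le_of_lt (Nat.lt_of_succ_le hk))
        have h2 := Submodule.finrank_lt_finrank_of_lt (hlt k (Nat.lt_of_succ_le hk))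
        omega
    have h0 : 0 < Module.finrank ℂ (V 0) := by
      rw [Module.finrank_pos_iff]
      refine ⟨⟨f, ?_⟩, 0, fun e => hf (congrArg Subtype.val e)⟩
      apply Submodule.subset_span
      refine ⟨0, ?_⟩
      funext x; simp
    have := key n le_rfl
    omega
  obtain ⟨k, hk, hstabk⟩ := hstab
  -- V k is stable under tau
  have hstable : Submodule.map (tau d v).toLinearMap (V k) = V k := by
    apply Submodule.eq_of_le_of_finrank_le (le_of_le_of_eq (hmap k) hstabk)
    rw [LinearEquiv.finrank_map_eq]
  -- all integer translates lie in V k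
  have hall : ∀ j : ℤ, (fun x : Fin d → ℝ => f (x + j • v)) ∈ V k := by
    intro j
    induction j using Int.induction_on with
    | zero =>
      apply Submodule.subset_span
      refine ⟨0, ?_⟩
      funext x; simp
    | succ i ih =>
      have : (tau d v).toLinearMap (fun x : Fin d → ℝ => f (x + (i : ℤ) • v)) ∈
          Submodule.map (tau d v).toLinearMap (V k) := ⟨_, ih, rfl⟩
      rw [hstable] at this
      convert this using 1
      funext x
      show f (x + ((i : ℤ) + 1) • v) = f (x + v + (i : ℤ) • v)
      congr 1
      module
    | pred i ih =>
      rw [← hstable] at ih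
      obtain ⟨w, hw, hww⟩ := ih
      have : w = fun x : Fin d → ℝ => f (x + (-(i : ℤ) - 1) • v) := by
        apply (tau d v).injective
        rw [show ((tau d v) w : (Fin d → ℝ) → ℂ) = (tau d v).toLinearMap w from rfl, hww]
        funext x
        show f (x + -(i : ℤ) • v) = f (x + v + (-(i : ℤ) - 1) • v)
        congr 1
        module
      rw [← this]; exact hw
  -- conclude
  have hle : V k ≤ Submodule.span ℂ
      (Set.range fun a : Fin n => fun x : Fin d → ℝ => f (x + (a : ℕ) • v)) := by
    apply Submodule.span_le.mpr
    rintro - ⟨a, rfl⟩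
    apply Submodule.subset_span
    exact ⟨⟨(a : ℕ), lt_of_lt_of_le a.2 hk⟩, rfl⟩
  exact hle (hall m)

lemma auxB (d s : ℕ) (f : (Fin d → ℝ) → ℂ) (h : Fin s → (Fin d → ℝ))
    (n : Fin s → ℕ) (hn : ∀ i, 1 ≤ n i)
    (hdim : ∀ i : Fin s, Module.rank ℂ ↥(Submodule.span ℂ
        (Set.range fun k : Fin (n i + 1) => fun x : Fin d → ℝ => f (x + (k : ℕ) • h i))) ≤ n i)
    (j : ℕ) :
    ∀ m : Fin s → ℤ, (∀ i : Fin s, j ≤ (i : ℕ) → 0 ≤ m i ∧ m i < n i) →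
      (fun x : Fin d → ℝ => f (x + ∑ i, m i • h i)) ∈
        Submodule.span ℂ
          {g : (Fin d → ℝ) → ℂ | ∃ a : Fin s → ℕ, (∀ i, a i < n i) ∧
            g = fun x : Fin d → ℝ => f (x + ∑ i, a i • h i)} := by
  induction j with
  | zero =>
    intro m hm
    apply Submodule.subset_span
    refine ⟨fun i => (m i).toNat, fun i => ?_, ?_⟩
    · show (m i).toNat < n i
      have := hm i (Nat.zero_le _); omega
    · funext x
      congr 2
      apply Finset.sum_congr rfl
      intro i _
      have h0 := (hm i (Nat.zero_le _)).1
      rw [← natCast_zsmul, Int.toNat_of_nonneg h0]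
  | succ j ih =>
    intro m hm
    by_cases hjs : j < s
    · set ι : Fin s := ⟨j, hjs⟩ with hι
      set c : Fin d → ℝ := ∑ i ∈ Finset.univ.erase ι, m i • h i with hc
      have hsum : ∑ i, m i • h i = m ι • h ι + c :=
        (Finset.add_sum_erase _ _ (Finset.mem_univ ι)).symm
      have hA := auxA f (h ι) (n ι) (hn ι) (hdim ι) (m ι)
      have hmem : (tau d c).toLinearMap (fun x : Fin d → ℝ => f (x + m ι • h ι)) ∈
          Submodule.map (tau d c).toLinearMap (Submodule.span ℂ
            (Set.range fun a : Fin (n ι) => fun x : Fin d → ℝ => f (x + (a : ℕ) • h ι))) :=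
        ⟨_, hA, rfl⟩
      rw [Submodule.map_span] at hmem
      have heq : (fun x : Fin d → ℝ => f (x + ∑ i, m i • h i)) =
          (tau d c).toLinearMap (fun x : Fin d → ℝ => f (x + m ι • h ι)) := by
        funext x
        show f (x + ∑ i, m i • h i) = f (x + c + m ι • h ι)
        rw [hsum]; congr 1; module
      rw [heq]
      refine Submodule.span_le.mpr ?_ hmem
      rintro - ⟨-, ⟨a, rfl⟩, rfl⟩
      have hupd : ∑ i, (Function.update m ι ((a : ℕ) : ℤ)) i • h i = ((a : ℕ) : ℤ) • h ι + c := by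
        rw [← Finset.add_sum_erase _ _ (Finset.mem_univ ι)]
        congr 1
        · rw [Function.update_self]
        · apply Finset.sum_congr rfl
          intro i hi
          rw [Function.update_of_ne (Finset.ne_of_mem_erase hi)]
      have h2 : (tau d c).toLinearMap ((fun a : Fin (n ι) =>
            fun x : Fin d → ℝ => f (x + (a : ℕ) • h ι)) a) =
          fun x : Fin d → ℝ => f (x + ∑ i, (Function.update m ι ((a : ℕ) : ℤ)) i • h i) := by
        funext x
        show f (x + c + (a : ℕ) • h ι) = _
        rw [hupd]
        congr 1
        module
      rw [h2]
      apply ih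
      intro i hi
      by_cases hiι : i = ι
      · subst hiι
        rw [Function.update_self]
        constructor
        · positivity
        · exact_mod_cast a.2
      · rw [Function.update_of_ne hiι]
        apply hm
        have : (i : ℕ) ≠ j := fun e => hiι (Fin.ext e)
        omega
    · apply ih
      intro i hi
      have := i.isLt
      omega


/-- If for each `i` the span of `{f, τ_{h i} f, …, (τ_{h i})^{n i} f}` has dimension at most
`n i ≥ 1`, then every translate of `f` by an integer combination of the `h i` lies in
`W = span {(τ_{h 1})^{a 1} ⋯ (τ_{h s})^{a s} f : 0 ≤ a i < n i}`, and the span of all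
translates of `f` by elements of the subgroup generated by the `h i` has dimension at most
`n 1 ⋯ n s`. -/
theorem stmt_1 (d s : ℕ) (f : (Fin d → ℝ) → ℂ) (h : Fin s → (Fin d → ℝ))
    (n : Fin s → ℕ) (hn : ∀ i, 1 ≤ n i)
    (hdim : ∀ i : Fin s,
      Module.rank ℂ ↥(Submodule.span ℂ
        (Set.range fun k : Fin (n i + 1) => fun x : Fin d → ℝ => f (x + (k : ℕ) • h i))) ≤ n i) :
    (∀ m : Fin s → ℤ,
      (fun x : Fin d → ℝ => f (x + ∑ i, m i • h i)) ∈
        Submodule.span ℂ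
          {g : (Fin d → ℝ) → ℂ | ∃ a : Fin s → ℕ, (∀ i, a i < n i) ∧
            g = fun x : Fin d → ℝ => f (x + ∑ i, a i • h i)}) ∧
    Module.rank ℂ ↥(Submodule.span ℂ
      {g : (Fin d → ℝ) → ℂ | ∃ v ∈ AddSubgroup.closure (Set.range h),
        g = fun x : Fin d → ℝ => f (x + v)}) ≤ ∏ i, n i := by
  have part1 : ∀ m : Fin s → ℤ,
      (fun x : Fin d → ℝ => f (x + ∑ i, m i • h i)) ∈
        Submodule.span ℂ
          {g : (Fin d → ℝ) → ℂ | ∃ a : Fin s → ℕ, (∀ i, a i < n i) ∧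
            g = fun x : Fin d → ℝ => f (x + ∑ i, a i • h i)} := by
    intro m
    apply auxB d s f h n hn hdim s m
    intro i hi
    have := i.isLt
    omega
  refine ⟨part1, ?_⟩
  -- the generating set of W is the range of a function from a finite type
  set F : (∀ i : Fin s, Fin (n i)) → ((Fin d → ℝ) → ℂ) := fun b =>
    fun x : Fin d → ℝ => f (x + ∑ i, (b i : ℕ) • h i) with hF
  have hWset : {g : (Fin d → ℝ) → ℂ | ∃ a : Fin s → ℕ, (∀ i, a i < n i) ∧
      g = fun x : Fin d → ℝ => f (x + ∑ i, a i • h i)} = Set.range F := by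
    ext g
    constructor
    · rintro ⟨a, ha, rfl⟩
      exact ⟨fun i => ⟨a i, ha i⟩, rfl⟩
    · rintro ⟨b, rfl⟩
      exact ⟨fun i => (b i : ℕ), fun i => (b i).2, rfl⟩
  have hUW : Submodule.span ℂ
      {g : (Fin d → ℝ) → ℂ | ∃ v ∈ AddSubgroup.closure (Set.range h),
        g = fun x : Fin d → ℝ => f (x + v)} ≤ Submodule.span ℂ (Set.range F) := by
    apply Submodule.span_le.mpr
    rintro - ⟨v, hv, rfl⟩
    have hv' : v ∈ Submodule.span ℤ (Set.range h) := by
      rw [← Submodule.span_int_eq_addSubgroupClosure] at hv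
      exact hv
    obtain ⟨m, hm⟩ := (Submodule.mem_span_range_iff_exists_fun ℤ).mp hv'
    rw [← hm, ← hWset]
    exact part1 m
  calc Module.rank ℂ ↥(Submodule.span ℂ
      {g : (Fin d → ℝ) → ℂ | ∃ v ∈ AddSubgroup.closure (Set.range h),
        g = fun x : Fin d → ℝ => f (x + v)})
      ≤ Module.rank ℂ ↥(Submodule.span ℂ (Set.range F)) := Submodule.rank_mono hUW
    _ ≤ #(Set.range F) := rank_span_le _
    _ ≤ #(∀ i : Fin s, Fin (n i)) := Cardinal.mk_range_le
    _ = ((∏ i, n i : ℕ) : Cardinal) := by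
        rw [Cardinal.mk_fintype]
        congr 1
        simp [Fintype.card_pi]
end

section
/- Let f : ℝ^d → ℂ be a continuous function, let G be a dense additive subgroup of ℝ^d, and let W be a finite-dimensional subspace of the space of functions ℝ^d → ℂ such that τ_g(f) ∈ W for every g ∈ G. Then τ_y(f) ∈ W for every y ∈ ℝ^d; that is, the span of all translates of f is contained in W and hence is finite-dimensional. -/
/-- Anselone–Korevaar-type closure argument: if `f` is continuous, `G` is a dense additive
subgroup of `ℝ^d`, and a finite-dimensional subspace `W` of functions contains all
translates `τ_g f` for `g ∈ G`, then `W` contains every translate `τ_y f`, `y ∈ ℝ^d`. -/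
theorem stmt_2 (d : ℕ) (f : (Fin d → ℝ) → ℂ) (hf : Continuous f)
    (G : AddSubgroup (Fin d → ℝ)) (hG : Dense (G : Set (Fin d → ℝ)))
    (W : Submodule ℂ ((Fin d → ℝ) → ℂ)) (hW : FiniteDimensional ℂ W)
    (htrans : ∀ g ∈ G, (fun x : Fin d → ℝ => f (x + g)) ∈ W) :
    ∀ y : Fin d → ℝ, (fun x : Fin d → ℝ => f (x + y)) ∈ W := by
  intro y
  have hclosed : IsClosed (W : Set ((Fin d → ℝ) → ℂ)) :=
    Submodule.closed_of_finiteDimensional W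
  have hne : (nhdsWithin y (G : Set (Fin d → ℝ))).NeBot :=
    mem_closure_iff_nhdsWithin_neBot.mp (hG y)
  have h1 : Filter.Tendsto (fun g : Fin d → ℝ => fun x => f (x + g))
      (nhdsWithin y (G : Set (Fin d → ℝ))) (nhds (fun x => f (x + y))) := by
    rw [tendsto_pi_nhds]
    intro x
    have : Filter.Tendsto (fun g : Fin d → ℝ => f (x + g)) (nhds y) (nhds (f (x + y))) :=
      (hf.comp (continuous_const.add continuous_id)).tendsto y
    exact this.mono_left nhdsWithin_le_nhds
  exact hclosed.mem_of_tendsto h1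
    (Filter.eventually_iff_exists_mem.mpr ⟨(G : Set (Fin d → ℝ)), self_mem_nhdsWithin,
      fun g hg => htrans g hg⟩)
end

section
/- Every nonempty open subset V of ℝ^d contains a finite set of vectors {h_0, h_1, ..., h_s} which generates a dense additive subgroup of ℝ^d; that is, there exist finitely many vectors, all lying in V, such that the set of their integer linear combinations is dense in ℝ^d. -/
open AddSubgroup in
lemma dense_two_gen (δ : ℝ) (hδ : 0 < δ) :
    Dense ((AddSubgroup.closure {δ, δ * Real.sqrt 2} : AddSubgroup ℝ) : Set ℝ) := by
  rcases AddSubgroup.dense_or_cyclic (AddSubgroup.closure {δ, δ * Real.sqrt 2}) with h | ⟨a, ha⟩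
  · exact h
  · exfalso
    have h1 : δ ∈ AddSubgroup.closure ({δ, δ * Real.sqrt 2} : Set ℝ) :=
      AddSubgroup.subset_closure (by simp)
    have h2 : δ * Real.sqrt 2 ∈ AddSubgroup.closure ({δ, δ * Real.sqrt 2} : Set ℝ) :=
      AddSubgroup.subset_closure (by simp)
    rw [ha, AddSubgroup.mem_closure_singleton] at h1 h2
    obtain ⟨n, hn⟩ := h1
    obtain ⟨m, hm⟩ := h2
    have hn0 : (n : ℝ) ≠ 0 := by
      rintro h
      rw [zsmul_eq_mul, h, zero_mul] at hn
      exact hδ.ne' hn.symm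
    have key : Real.sqrt 2 = ((m : ℚ) / (n : ℚ) : ℚ) := by
      have : (n : ℝ) * (δ * Real.sqrt 2) = (m : ℝ) * δ := by
        rw [← hm, ← hn]; push_cast [zsmul_eq_mul]; ring
      push_cast
      field_simp
      nlinarith [this]
    exact irrational_sqrt_two ⟨_, key.symm⟩

/-- Every nonempty open subset of `ℝ^d` contains finitely many vectors generating a dense
additive subgroup of `ℝ^d`. -/
theorem stmt_3 (d : ℕ) (V : Set (Fin d → ℝ)) (hV : IsOpen V) (hVne : V.Nonempty) :
    ∃ (s : ℕ) (h : Fin s → (Fin d → ℝ)), (∀ i, h i ∈ V) ∧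
      Dense ((AddSubgroup.closure (Set.range h) : AddSubgroup (Fin d → ℝ)) :
        Set (Fin d → ℝ)) := by
  obtain ⟨x, hx⟩ := hVne
  obtain ⟨ε, hε, hball⟩ := Metric.isOpen_iff.1 hV x hx
  set δ : ℝ := ε / 2 with hδdef
  have hδ : 0 < δ := by positivity
  have hsqrt2 : Real.sqrt 2 < 2 := by
    nlinarith [Real.sq_sqrt (by norm_num : (2:ℝ) ≥ 0), Real.sqrt_nonneg 2]
  have hsqrt0 : (0:ℝ) < Real.sqrt 2 := Real.sqrt_pos.2 (by norm_num)
  set h : Fin (2 * d + 1) → (Fin d → ℝ) := fun k =>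
    if hk : (k : ℕ) < d then x + Pi.single (⟨k, hk⟩ : Fin d) δ
    else if hk2 : (k : ℕ) - d < d then
      x + Pi.single (⟨(k : ℕ) - d, hk2⟩ : Fin d) (δ * Real.sqrt 2)
    else x with hhdef
  refine ⟨2 * d + 1, h, ?_, ?_⟩
  · -- membership in V
    intro k
    apply hball
    rw [Metric.mem_ball]
    have key : ∀ (i : Fin d) (c : ℝ), |c| < ε → dist (x + Pi.single i c) x < ε := by
      intro i c hc
      rw [dist_self_add_left, Pi.norm_single, Real.norm_eq_abs]
      exact hc
    simp only [hhdef]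
    split_ifs with h1 h2
    · exact key _ _ (by rw [abs_of_pos hδ]; simp [hδdef]; linarith)
    · exact key _ _ (by rw [abs_of_pos (by positivity)]; simp [hδdef]; nlinarith)
    · simpa using hε
  · -- density
    set G := AddSubgroup.closure (Set.range h) with hGdef
    have hxG : x ∈ G := by
      apply AddSubgroup.subset_closure
      refine ⟨⟨2 * d, by omega⟩, ?_⟩
      simp only [hhdef]
      rw [dif_neg (by omega), dif_neg (by omega)]
    have hsingle : ∀ (i : Fin d) (c : ℝ), x + Pi.single i c ∈ Set.range h →
        Pi.single i c ∈ G := by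
      intro i c hmem
      have : x + Pi.single i c ∈ G := AddSubgroup.subset_closure hmem
      have := G.sub_mem this hxG
      simpa using this
    have hδG : ∀ i : Fin d, Pi.single i δ ∈ G := by
      intro i
      apply hsingle
      refine ⟨⟨(i : ℕ), by omega⟩, ?_⟩
      simp only [hhdef]
      rw [dif_pos (i.isLt)]
    have hδ2G : ∀ i : Fin d, Pi.single i (δ * Real.sqrt 2) ∈ G := by
      intro i
      apply hsingle
      refine ⟨⟨(i : ℕ) + d, by omega⟩, ?_⟩
      simp only [hhdef]
      rw [dif_neg (by simp), dif_pos (by simp)]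
      simp
    -- each coordinate line is in the closure of G
    have hline : ∀ (i : Fin d) (t : ℝ), Pi.single i t ∈ closure (G : Set (Fin d → ℝ)) := by
      intro i t
      set φ : ℝ →ₗ[ℝ] (Fin d → ℝ) :=
        LinearMap.toSpanSingleton ℝ (Fin d → ℝ) (Pi.single i 1) with hφdef
      have hφval : ∀ r : ℝ, φ r = Pi.single i r := by
        intro r
        simp [hφdef, LinearMap.toSpanSingleton_apply, ← Pi.single_smul, smul_eq_mul]
      set S := AddSubgroup.closure ({δ, δ * Real.sqrt 2} : Set ℝ) with hSdef
      have hSG : ∀ r ∈ S, φ r ∈ G := by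
        intro r hr
        have hle : S ≤ AddSubgroup.comap φ.toAddMonoidHom G := by
          rw [hSdef, AddSubgroup.closure_le]
          rintro y (rfl | rfl)
          · simpa [hφval] using hδG i
          · simpa [hφval] using hδ2G i
        exact hle hr
      have hdense := dense_two_gen δ hδ
      have hφcont : Continuous φ := by
        simp only [hφdef]
        exact (LinearMap.toSpanSingleton ℝ (Fin d → ℝ) (Pi.single i 1)).continuous_of_finiteDimensional
      have h1 : φ t ∈ closure (φ '' (S : Set ℝ)) := by
        apply image_closure_subset_closure_image hφcont
        exact ⟨t, hdense t, rfl⟩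
      have h2 : closure (φ '' (S : Set ℝ)) ⊆ closure (G : Set (Fin d → ℝ)) := by
        apply closure_mono
        rintro _ ⟨r, hr, rfl⟩
        exact hSG r hr
      have := h2 h1
      rwa [hφval] at this
    -- conclude
    intro v
    have hv : v = ∑ i : Fin d, Pi.single i (v i) := by
      rw [Finset.univ_sum_single]
    rw [hv]
    have : ∀ i : Fin d, Pi.single i (v i) ∈ G.topologicalClosure := fun i => hline i (v i)
    exact AddSubgroup.sum_mem G.topologicalClosure (fun i _ => this i)
end

section
/- Let f : ℝ^d → ℂ be a function and let T_1, ..., T_d > 0 be real numbers such that for every index k ∈ {1, ..., d} and every point (a_1, ..., a_{k-1}, a_{k+1}, ..., a_d) ∈ ℝ^{d-1}, the one-variable function x_k ↦ f(a_1, ..., a_{k-1}, x_k, a_{k+1}, ..., a_d) is a T_k-periodic trigonometric polynomial. Then f is a trigonometric polynomial in d variables with these periods: there exist a finite set F ⊂ ℤ^d and coefficients c_α ∈ ℂ (α ∈ F) such that f(x_1, ..., x_d) = Σ_{α ∈ F} c_α · exp(2πi(α_1 x_1/T_1 + ... + α_d x_d/T_d)) for all (x_1, ..., x_d) ∈ ℝ^d.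 No continuity of f is assumed. -/
open scoped BigOperators
open Complex Finset Submodule

noncomputable section TrigAux

/-- one-variable character -/
def char1 (T : ℝ) (m : ℤ) : ℝ → ℂ := fun t => Complex.exp (2 * Real.pi * Complex.I * (m:ℂ) * (t:ℂ) / (T:ℂ))

/-- multivariable character -/
def chard (d : ℕ) (T : Fin d → ℝ) (α : Fin d → ℤ) : (Fin d → ℝ) → ℂ :=
  fun x => Complex.exp (2 * Real.pi * Complex.I * ∑ k, (α k : ℂ) * (x k : ℂ) / (T k : ℂ))

def M1 (T : ℝ) : Submodule ℂ (ℝ → ℂ) := Submodule.span ℂ (Set.range (char1 T))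
def Md (d : ℕ) (T : Fin d → ℝ) : Submodule ℂ ((Fin d → ℝ) → ℂ) :=
  Submodule.span ℂ (Set.range (chard d T))

lemma char1_eq_zpow (T : ℝ) (m : ℤ) (t : ℝ) :
    char1 T m t = Complex.exp (2 * Real.pi * Complex.I * t / T) ^ m := by
  rw [char1, ← Complex.exp_int_mul]
  ring_nf

/-- fibers of t ↦ exp(2πit/T) are countable -/
lemma fiber_countable (T : ℝ) (hT : T ≠ 0) (t0 : ℝ) :
    {t : ℝ | Complex.exp (2 * Real.pi * Complex.I * t / T)
      = Complex.exp (2 * Real.pi * Complex.I * t0 / T)}.Countable := by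
  have hsub : {t : ℝ | Complex.exp (2 * Real.pi * Complex.I * t / T)
      = Complex.exp (2 * Real.pi * Complex.I * t0 / T)} ⊆
      Set.range (fun n : ℤ => t0 + n * T) := by
    intro t ht
    simp only [Set.mem_setOf_eq] at ht
    rw [Complex.exp_eq_exp_iff_exists_int] at ht
    obtain ⟨n, hn⟩ := ht
    refine ⟨n, ?_⟩
    have hTc : (T:ℂ) ≠ 0 := by exact_mod_cast hT
    have hI : Complex.I ≠ 0 := Complex.I_ne_zero
    have hpi : (Real.pi : ℂ) ≠ 0 := by exact_mod_cast Real.pi_ne_zero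
    have : (t : ℂ) = t0 + n * T := by
      field_simp at hn
      have h2 : (2:ℂ) * Real.pi * Complex.I * t = 2 * Real.pi * Complex.I * (t0 + n * T) := by
        rw [hn]; ring
      have h2' := mul_left_cancel₀ (a := (2:ℂ) * Real.pi * Complex.I)
        (by simp [hpi, hI]) h2
      exact h2'
    exact_mod_cast this.symm
  exact (Set.countable_range _).mono hsub

/-- key uniqueness: an element of M1 vanishing on an uncountable set vanishes. -/
lemma vanish (T : ℝ) (hT : T ≠ 0) (E : Set ℝ) (hE : ¬ E.Countable)
    (φ : ℝ → ℂ) (hφ : φ ∈ M1 T) (h0 : ∀ t ∈ E, φ t = 0) : φ = 0 := by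
  obtain ⟨c, hc⟩ := Finsupp.mem_span_range_iff_exists_finsupp.mp hφ
  set z : ℝ → ℂ := fun t => Complex.exp (2 * Real.pi * Complex.I * t / T) with hz
  have hzne : ∀ t, z t ≠ 0 := fun t => Complex.exp_ne_zero _
  set N : ℤ := ((c.support.sup (fun m => (-m).toNat) : ℕ) : ℤ) with hN
  have hNm : ∀ m ∈ c.support, 0 ≤ m + N := by
    intro m hm
    have h1 : (-m).toNat ≤ c.support.sup (fun m => (-m).toNat) :=
      Finset.le_sup (f := fun m => (-m).toNat) hm
    have h2 : -m ≤ ((-m).toNat : ℤ) := Int.self_le_toNat _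
    have h3 : (((-m).toNat : ℕ) : ℤ) ≤ N := by rw [hN]; exact_mod_cast h1
    linarith
  set Q : Polynomial ℂ := ∑ m ∈ c.support, Polynomial.C (c m) * Polynomial.X ^ (m + N).toNat
    with hQ
  have keyQ : ∀ t, Q.eval (z t) = φ t * z t ^ N := by
    intro t
    have hφt : φ t = ∑ m ∈ c.support, c m * z t ^ m := by
      rw [← hc]
      rw [Finsupp.sum]
      simp only [Finset.sum_apply, Pi.smul_apply, smul_eq_mul]
      refine Finset.sum_congr rfl fun m _ => ?_
      rw [char1_eq_zpow]
    rw [hφt, Finset.sum_mul, hQ, Polynomial.eval_finset_sum]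
    refine Finset.sum_congr rfl fun m hm => ?_
    simp only [Polynomial.eval_mul, Polynomial.eval_C, Polynomial.eval_pow, Polynomial.eval_X]
    rw [mul_assoc, ← zpow_natCast (z t), Int.toNat_of_nonneg (hNm m hm), zpow_add₀ (hzne t)]
  have himg : (z '' E).Infinite := by
    intro hfin
    apply hE
    have : E ⊆ ⋃ w ∈ z '' E, {t : ℝ | z t = w} := by
      intro t ht
      exact Set.mem_biUnion (Set.mem_image_of_mem z ht) rfl
    refine Set.Countable.mono this ?_
    refine Set.Countable.biUnion hfin.countable ?_
    rintro w ⟨t0, _, rfl⟩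
    exact fiber_countable T hT t0
  have hQ0 : Q = 0 := by
    apply Polynomial.eq_zero_of_infinite_isRoot
    apply Set.Infinite.mono ?_ himg
    rintro w ⟨t, ht, rfl⟩
    show Q.IsRoot (z t)
    rw [Polynomial.IsRoot, keyQ, h0 t ht, zero_mul]
  funext t
  have := keyQ t
  rw [hQ0, Polynomial.eval_zero] at this
  have := this.symm
  rcases mul_eq_zero.mp this with h | h
  · simpa using h
  · exact absurd h (zpow_ne_zero _ (hzne t))

end TrigAux
noncomputable section TrigAux2
open Complex Finset Submodule

/-- separating points for a finite-dimensional space of functions -/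
lemma sep_points_aux {X : Type} (n : ℕ) :
    ∀ (V : Submodule ℂ (X → ℂ)) [FiniteDimensional ℂ V], Module.finrank ℂ V ≤ n →
    ∃ s : Finset X, ∀ v ∈ V, (∀ x ∈ s, v x = 0) → v = 0 := by
  induction n with
  | zero =>
    intro V _ hr
    have : V = ⊥ := by
      rw [← Submodule.finrank_eq_zero (S := V)]
      omega
    exact ⟨∅, fun v hv _ => by simpa [this] using hv⟩
  | succ n ih =>
    intro V _ hr
    by_cases hbot : V = ⊥
    · exact ⟨∅, fun v hv _ => by simpa [hbot] using hv⟩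
    · obtain ⟨v0, hv0V, hv0⟩ := Submodule.exists_mem_ne_zero_of_ne_bot hbot
      have : ∃ x0, v0 x0 ≠ 0 := by
        by_contra h
        push_neg at h
        exact hv0 (funext h)
      obtain ⟨x0, hx0⟩ := this
      set V' : Submodule ℂ (X → ℂ) := V ⊓ LinearMap.ker (LinearMap.proj x0 : (X → ℂ) →ₗ[ℂ] ℂ)
        with hV'
      have hle : V' ≤ V := inf_le_left
      have hlt : V' < V := lt_of_le_of_ne hle (by
        intro h
        have : v0 ∈ V' := h ▸ hv0V
        exact hx0 (this.2))
      haveI : FiniteDimensional ℂ V' := Submodule.finiteDimensional_of_le hle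
      have hr' : Module.finrank ℂ V' ≤ n := by
        have := Submodule.finrank_lt_finrank_of_lt hlt
        omega
      obtain ⟨s, hs⟩ := ih V' hr'
      haveI := Classical.decEq X
      refine ⟨insert x0 s, fun v hv hvan => ?_⟩
      refine hs v ⟨hv, ?_⟩ (fun x hx => hvan x (Finset.mem_insert_of_mem hx))
      exact hvan x0 (Finset.mem_insert_self _ _)

lemma sep_points {X : Type} (V : Submodule ℂ (X → ℂ)) [FiniteDimensional ℂ V] :
    ∃ s : Finset X, ∀ v ∈ V, (∀ x ∈ s, v x = 0) → v = 0 :=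
  sep_points_aux (Module.finrank ℂ V) V le_rfl

/-- uncountable fiber of a map to a countable type -/
lemma exists_uncountable_fiber {β : Type} [Countable β] (g : ℝ → β) :
    ∃ b, ¬ ({t : ℝ | g t = b}.Countable) := by
  by_contra h
  push_neg at h
  apply Cardinal.not_countable_real
  have : (Set.univ : Set ℝ) = ⋃ b, {t : ℝ | g t = b} := by
    ext t; simp
  rw [this]
  exact Set.countable_iUnion h

/-- membership of explicit 1-var trig polys in M1 -/
lemma mem_M1 (T : ℝ) (S : Finset ℤ) (b : ℤ → ℂ) :
    (fun t : ℝ => ∑ m ∈ S, b m *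
      Complex.exp (2 * Real.pi * Complex.I * (m:ℂ) * (t:ℂ) / (T:ℂ))) ∈ M1 T := by
  have : (fun t : ℝ => ∑ m ∈ S, b m *
      Complex.exp (2 * Real.pi * Complex.I * (m:ℂ) * (t:ℂ) / (T:ℂ)))
      = ∑ m ∈ S, b m • char1 T m := by
    funext t
    simp [char1]
  rw [this]
  exact Submodule.sum_mem _ fun m _ =>
    Submodule.smul_mem _ _ (Submodule.subset_span ⟨m, rfl⟩)

/-- the (d+1)-char splits as product -/
lemma chard_snoc (d : ℕ) (T : Fin (d+1) → ℝ) (α : Fin d → ℤ) (m : ℤ) (z : Fin (d+1) → ℝ) :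
    chard (d+1) T (Fin.snoc α m) z
      = chard d (Fin.init T) α (Fin.init z) * char1 (T (Fin.last d)) m (z (Fin.last d)) := by
  rw [chard, chard, char1, ← Complex.exp_add]
  congr 1
  rw [Fin.sum_univ_castSucc]
  simp only [Fin.snoc_castSucc, Fin.snoc_last, Fin.init]
  ring

/-- product of a d-variable trig poly in the first variables and a 1-var trig poly
in the last is a (d+1)-variable trig poly -/
lemma trig_prod_mem (d : ℕ) (T : Fin (d+1) → ℝ) (g : (Fin d → ℝ) → ℂ)
    (hg : g ∈ Md d (Fin.init T)) (h : ℝ → ℂ) (hh : h ∈ M1 (T (Fin.last d))) :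
    (fun z : Fin (d+1) → ℝ => g (Fin.init z) * h (z (Fin.last d))) ∈ Md (d+1) T := by
  induction hg using Submodule.span_induction with
  | mem g hgmem =>
    obtain ⟨α, rfl⟩ := hgmem
    induction hh using Submodule.span_induction with
    | mem h hhmem =>
      obtain ⟨m, rfl⟩ := hhmem
      have : (fun z : Fin (d+1) → ℝ =>
          chard d (Fin.init T) α (Fin.init z) * char1 (T (Fin.last d)) m (z (Fin.last d)))
          = chard (d+1) T (Fin.snoc α m) := by
        funext z
        rw [chard_snoc]
      rw [this]
      exact Submodule.subset_span ⟨_, rfl⟩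
    | zero =>
      have : (fun z : Fin (d+1) → ℝ =>
          chard d (Fin.init T) α (Fin.init z) * (0 : ℝ → ℂ) (z (Fin.last d)))
          = 0 := by funext z; simp
      rw [this]; exact Submodule.zero_mem _
    | add h1 h2 hh1 hh2 ih1 ih2 =>
      have : (fun z : Fin (d+1) → ℝ =>
          chard d (Fin.init T) α (Fin.init z) * (h1 + h2) (z (Fin.last d)))
          = (fun z : Fin (d+1) → ℝ => chard d (Fin.init T) α (Fin.init z) * h1 (z (Fin.last d)))
            + (fun z => chard d (Fin.init T) α (Fin.init z) * h2 (z (Fin.last d))) := by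
        funext z; simp; ring
      rw [this]; exact Submodule.add_mem _ ih1 ih2
    | smul a h1 hh1 ih =>
      have : (fun z : Fin (d+1) → ℝ =>
          chard d (Fin.init T) α (Fin.init z) * (a • h1) (z (Fin.last d)))
          = a • (fun z : Fin (d+1) → ℝ =>
              chard d (Fin.init T) α (Fin.init z) * h1 (z (Fin.last d))) := by
        funext z; simp; ring
      rw [this]; exact Submodule.smul_mem _ _ ih
  | zero =>
    have : (fun z : Fin (d+1) → ℝ => (0 : (Fin d → ℝ) → ℂ) (Fin.init z) * h (z (Fin.last d)))
        = 0 := by funext z; simp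
    rw [this]; exact Submodule.zero_mem _
  | add g1 g2 hg1 hg2 ih1 ih2 =>
    have : (fun z : Fin (d+1) → ℝ => (g1 + g2) (Fin.init z) * h (z (Fin.last d)))
        = (fun z : Fin (d+1) → ℝ => g1 (Fin.init z) * h (z (Fin.last d)))
          + (fun z => g2 (Fin.init z) * h (z (Fin.last d))) := by
      funext z; simp; ring
    rw [this]; exact Submodule.add_mem _ ih1 ih2
  | smul a g1 hg1 ih =>
    have : (fun z : Fin (d+1) → ℝ => (a • g1) (Fin.init z) * h (z (Fin.last d)))
        = a • (fun z : Fin (d+1) → ℝ => g1 (Fin.init z) * h (z (Fin.last d))) := by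
      funext z; simp; ring
    rw [this]; exact Submodule.smul_mem _ _ ih

end TrigAux2
noncomputable section TrigMain
open Complex Finset Submodule

lemma trig_main : ∀ (d : ℕ) (T : Fin d → ℝ), (∀ k, 0 < T k) →
    ∀ f : (Fin d → ℝ) → ℂ,
    (∀ (k : Fin d) (a : Fin d → ℝ), ∃ (S : Finset ℤ) (b : ℤ → ℂ), ∀ t : ℝ,
        f (Function.update a k t) =
          ∑ m ∈ S, b m * Complex.exp (2 * Real.pi * Complex.I * (m : ℂ) * (t : ℂ) / (T k : ℂ))) →
    f ∈ Md d T := by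
  intro d
  induction d with
  | zero =>
    intro T hT f _
    have : f = f (fun i => i.elim0) • chard 0 T (fun i => i.elim0) := by
      funext x
      have hx : x = (fun i => i.elim0) := funext fun i => i.elim0
      simp [chard, hx]
    rw [this]
    exact Submodule.smul_mem _ _ (Submodule.subset_span ⟨_, rfl⟩)
  | succ d ih =>
    intro T hT f hsep
    set T' : Fin d → ℝ := Fin.init T with hT'def
    have hT' : ∀ k, 0 < T' k := fun k => hT _
    -- slices in the last variable are trig polys in the first d variables
    set fT : ℝ → (Fin d → ℝ) → ℂ := fun t y => f (Fin.snoc y t) with hfT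
    have hIH : ∀ t, fT t ∈ Md d T' := by
      intro t
      apply ih T' hT'
      intro k a
      obtain ⟨S, b, hSb⟩ := hsep k.castSucc (Fin.snoc a t)
      refine ⟨S, b, fun s => ?_⟩
      have h1 : (Fin.snoc (Function.update a k s) t : Fin (d+1) → ℝ)
          = Function.update (Fin.snoc a t : Fin (d+1) → ℝ) k.castSucc s := by
        simp [Fin.snoc_update]
      show f (Fin.snoc (Function.update a k s) t) = _
      rw [h1, hSb s]
      rfl
    -- each fixed tuple gives a 1-variable trig poly in the last variable
    have hx1var : ∀ (x : Fin d → ℝ),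
        (fun t : ℝ => f (Fin.snoc x t)) ∈ M1 (T (Fin.last d)) := by
      intro x
      obtain ⟨S, b, hSb⟩ := hsep (Fin.last d) (Fin.snoc x 0)
      have : (fun t : ℝ => f (Fin.snoc x t)) = fun t : ℝ => ∑ m ∈ S, b m *
          Complex.exp (2 * Real.pi * Complex.I * (m:ℂ) * (t:ℂ) / (T (Fin.last d) : ℂ)) := by
        funext t
        rw [← hSb t, Fin.update_snoc_last]
      rw [this]
      exact mem_M1 _ S b
    -- choose finite-support representations of the slices
    have hrep : ∀ t, ∃ c : (Fin d → ℤ) →₀ ℂ, (c.sum fun α a => a • chard d T' α) = fT t :=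
      fun t => Finsupp.mem_span_range_iff_exists_finsupp.mp (hIH t)
    choose crep hcrep using hrep
    -- an uncountable set of t with a common frequency support
    obtain ⟨S, hE⟩ := exists_uncountable_fiber (fun t => (crep t).support)
    set E : Set ℝ := {t | (crep t).support = S} with hEdef
    set VS : Submodule ℂ ((Fin d → ℝ) → ℂ) :=
      Submodule.span ℂ (chard d T' '' (S : Set (Fin d → ℤ))) with hVS
    haveI : FiniteDimensional ℂ VS :=
      FiniteDimensional.span_of_finite ℂ ((S : Set (Fin d → ℤ)).toFinite.image _)
    have hmemVS : ∀ t ∈ E, fT t ∈ VS := by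
      intro t ht
      rw [← hcrep t, Finsupp.sum]
      refine Submodule.sum_mem _ fun α hα => Submodule.smul_mem _ _ ?_
      refine Submodule.subset_span ⟨α, ?_, rfl⟩
      rw [hEdef] at ht
      exact ht ▸ hα
    -- separating points and left inverse of the evaluation map
    obtain ⟨pts, hpts⟩ := sep_points VS
    set Φ : VS →ₗ[ℂ] ({x // x ∈ pts} → ℂ) :=
      LinearMap.pi (fun x => (LinearMap.proj (x : Fin d → ℝ)).comp VS.subtype) with hΦ
    have hker : LinearMap.ker Φ = ⊥ := by
      rw [LinearMap.ker_eq_bot']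
      intro v hv
      apply Subtype.ext
      refine hpts v v.2 fun x hx => ?_
      have := congrFun hv ⟨x, hx⟩
      simpa [hΦ] using this
    obtain ⟨L, hL⟩ := LinearMap.exists_leftInverse_of_injective Φ hker
    haveI := Classical.decEq {x // x ∈ pts}
    set v_ : {x // x ∈ pts} → VS := fun x => L (fun j => if x = j then 1 else 0) with hv_
    have hv_mem : ∀ x, (↑(v_ x) : (Fin d → ℝ) → ℂ) ∈ Md d T' := by
      intro x
      have : VS ≤ Md d T' := Submodule.span_mono (Set.image_subset_range _ _)
      exact this (v_ x).2
    -- decomposition of slices for t ∈ E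
    have hdec : ∀ t ∈ E, ∀ y : Fin d → ℝ,
        fT t y = ∑ x : {x // x ∈ pts}, (↑(v_ x) : (Fin d → ℝ) → ℂ) y * f (Fin.snoc ↑x t) := by
      intro t ht y
      set w : VS := ⟨fT t, hmemVS t ht⟩ with hw
      have h1 : L (Φ w) = w := LinearMap.congr_fun hL w
      have h2 : L (Φ w) = ∑ x : {x // x ∈ pts}, (Φ w) x • v_ x :=
        LinearMap.pi_apply_eq_sum_univ L (Φ w)
      have h3 : ∀ x : {x // x ∈ pts}, (Φ w) x = f (Fin.snoc (↑x : Fin d → ℝ) t) := by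
        intro x
        simp [hΦ, hw, hfT]
      have h4 : w = ∑ x : {x // x ∈ pts}, (Φ w) x • v_ x := h1.symm.trans h2
      have h5 : fT t y
          = (↑(∑ x : {x // x ∈ pts}, (Φ w) x • v_ x) : (Fin d → ℝ) → ℂ) y := by
        rw [← h4]
      rw [h5, Submodule.coe_sum]
      simp only [Finset.sum_apply, Pi.smul_apply, SetLike.val_smul, smul_eq_mul]
      exact Finset.sum_congr rfl fun x _ => by rw [h3 x]; ring
    -- the candidate global trig polynomial
    set G : (Fin (d+1) → ℝ) → ℂ := fun z =>
      ∑ x : {x // x ∈ pts}, (↑(v_ x) : (Fin d → ℝ) → ℂ) (Fin.init z)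
        * f (Fin.snoc ↑x (z (Fin.last d))) with hG
    have hGmem : G ∈ Md (d+1) T := by
      have : G = ∑ x : {x // x ∈ pts}, (fun z : Fin (d+1) → ℝ =>
          (↑(v_ x) : (Fin d → ℝ) → ℂ) (Fin.init z) * (fun t => f (Fin.snoc ↑x t)) (z (Fin.last d))) := by
        funext z
        simp [hG]
      rw [this]
      exact Submodule.sum_mem _ fun x _ =>
        trig_prod_mem d T _ (hv_mem x) _ (hx1var ↑x)
    -- f agrees with G
    have hfG : f = G := by
      funext z
      have key : (fun t : ℝ => f (Fin.snoc (Fin.init z) t)) =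
          (fun t : ℝ => G (Fin.snoc (Fin.init z) t)) := by
        have hGslice : (fun t : ℝ => G (Fin.snoc (Fin.init z) t))
            = fun t : ℝ => ∑ x : {x // x ∈ pts},
                (↑(v_ x) : (Fin d → ℝ) → ℂ) (Fin.init z) * f (Fin.snoc ↑x t) := by
          funext t
          rw [hG]
          simp only [Fin.init_snoc, Fin.snoc_last]
        have hmem2 : (fun t : ℝ => G (Fin.snoc (Fin.init z) t)) ∈ M1 (T (Fin.last d)) := by
          rw [hGslice]
          have : (fun t : ℝ => ∑ x : {x // x ∈ pts},
              (↑(v_ x) : (Fin d → ℝ) → ℂ) (Fin.init z) * f (Fin.snoc ↑x t))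
              = ∑ x : {x // x ∈ pts}, ((↑(v_ x) : (Fin d → ℝ) → ℂ) (Fin.init z))
                  • (fun t : ℝ => f (Fin.snoc (↑x : Fin d → ℝ) t)) := by
            funext t
            simp
          rw [this]
          exact Submodule.sum_mem _ fun x _ => Submodule.smul_mem _ _ (hx1var ↑x)
        have hmem1 := hx1var (Fin.init z)
        have hvan := vanish (T (Fin.last d)) (ne_of_gt (hT _)) E hE
          ((fun t : ℝ => f (Fin.snoc (Fin.init z) t)) - (fun t : ℝ => G (Fin.snoc (Fin.init z) t)))
          (Submodule.sub_mem _ hmem1 hmem2)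
          (by
            intro t ht
            have hdt := hdec t ht (Fin.init z)
            have hg2 := congrFun hGslice t
            simp only [Pi.sub_apply]
            rw [hg2, sub_eq_zero]
            exact hdt)
        funext t
        have := congrFun hvan t
        simpa [sub_eq_zero] using this
      have := congrFun key (z (Fin.last d))
      simpa [Fin.snoc_init_self] using this
    rw [hfG]
    exact hGmem

end TrigMain

/-- A function `f : ℝ^d → ℂ` which, separately in each variable `k` (all other coordinates
being fixed arbitrarily), is a `T k`-periodic trigonometric polynomial, is a trigonometric
polynomial in `d` variables with periods `T 1, …, T d`. No continuity is assumed. -/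
theorem stmt_7 (d : ℕ) (f : (Fin d → ℝ) → ℂ) (T : Fin d → ℝ) (hT : ∀ k, 0 < T k)
    (hsep : ∀ (k : Fin d) (a : Fin d → ℝ),
      ∃ (S : Finset ℤ) (b : ℤ → ℂ), ∀ t : ℝ,
        f (Function.update a k t) =
          ∑ m ∈ S, b m * Complex.exp (2 * Real.pi * Complex.I * (m : ℂ) * (t : ℂ) / (T k : ℂ))) :
    ∃ (F : Finset (Fin d → ℤ)) (c : (Fin d → ℤ) → ℂ), ∀ x : Fin d → ℝ,
      f x = ∑ α ∈ F, c α *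
        Complex.exp (2 * Real.pi * Complex.I * ∑ k, (α k : ℂ) * (x k : ℂ) / (T k : ℂ)) := by
  have hmem : f ∈ Md d T := trig_main d T hT f hsep
  obtain ⟨c, hc⟩ := Finsupp.mem_span_range_iff_exists_finsupp.mp hmem
  refine ⟨c.support, c, fun x => ?_⟩
  rw [← hc, Finsupp.sum]
  simp only [Finset.sum_apply, Pi.smul_apply, smul_eq_mul]
  rfl
end

section
/- Let f : ℝ^d → ℂ be an exponential polynomial, i.e., f(x) = Σ_j P_j(x)·exp(λ_j · x) for finitely many λ_j ∈ ℂ^d and polynomials P_j ∈ ℂ[X_1,...,X_d]. Then there exists a natural number n such that f satisfies the Popoviciu–Ionescu functional equation of order n in ℝ^d: for all x, h ∈ ℝ^d, det[f(x + (i + j)h)]_{0 ≤ i, j ≤ n} = 0. -/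
open scoped BigOperators

/-- Every exponential polynomial `f : ℝ^d → ℂ` satisfies the Popoviciu–Ionescu functional
equation of some order `n` in `ℝ^d`. -/
theorem stmt_9 (d : ℕ) (f : (Fin d → ℝ) → ℂ)
    (hf : ∃ (m : ℕ) (lam : Fin m → (Fin d → ℂ)) (P : Fin m → MvPolynomial (Fin d) ℂ),
      ∀ x : Fin d → ℝ,
        f x = ∑ j, (MvPolynomial.eval (fun k => (x k : ℂ)) (P j)) *
          Complex.exp (∑ k, lam j k * (x k : ℂ))) :
    ∃ n : ℕ, ∀ x h : Fin d → ℝ,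
      Matrix.det (Matrix.of fun i j : Fin (n + 1) =>
        f (x + ((i : ℕ) + (j : ℕ)) • h)) = 0 := by
  classical
  obtain ⟨m, lam, P, hP⟩ := hf
  set D : ℕ := Finset.univ.sup fun j => (P j).totalDegree with hD
  refine ⟨m * (D + 1), fun x h => ?_⟩
  set g : Fin d → Polynomial ℂ :=
    fun k => Polynomial.C (x k : ℂ) + Polynomial.C (h k : ℂ) * Polynomial.X with hg
  set q : Fin m → Polynomial ℂ := fun j => MvPolynomial.eval₂ Polynomial.C g (P j) with hq
  -- degree bound
  have hg1 : ∀ k, (g k).natDegree ≤ 1 := by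
    intro k
    refine (Polynomial.natDegree_add_le _ _).trans (max_le (by simp) ?_)
    exact (Polynomial.natDegree_mul_le).trans (by simp)
  have hdeg : ∀ j, (q j).natDegree ≤ D := by
    intro j
    rw [hq]
    simp only
    rw [MvPolynomial.eval₂_eq]
    apply Polynomial.natDegree_sum_le_of_forall_le
    intro s hs
    refine (Polynomial.natDegree_mul_le).trans ?_
    simp only [Polynomial.natDegree_C, zero_add]
    refine (Polynomial.natDegree_prod_le _ _).trans ?_
    have h1 : ∀ i ∈ s.support, (g i ^ s i).natDegree ≤ s i := by
      intro i _
      refine (Polynomial.natDegree_pow_le).trans ?_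
      calc s i * (g i).natDegree ≤ s i * 1 := Nat.mul_le_mul_left _ (hg1 i)
        _ = s i := mul_one _
    refine (Finset.sum_le_sum h1).trans ?_
    have h2 : (∑ i ∈ s.support, s i) ≤ (P j).totalDegree := MvPolynomial.le_totalDegree hs
    exact h2.trans (by rw [hD]; exact Finset.le_sup (f := fun j => (P j).totalDegree) (Finset.mem_univ j))
  -- evaluation identity
  have heval : ∀ (j : Fin m) (N : ℕ),
      MvPolynomial.eval (fun k => ((x k : ℂ) + (N : ℂ) * (h k : ℂ))) (P j)
        = (q j).eval (N : ℂ) := by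
    intro j N
    rw [hq]
    simp only
    induction (P j) using MvPolynomial.induction_on with
    | C a => simp
    | add p r hp hr => simp [hp, hr]
    | mul_X p r hp =>
      rw [MvPolynomial.eval₂_mul, MvPolynomial.eval₂_X, MvPolynomial.eval_mul,
        MvPolynomial.eval_X, Polynomial.eval_mul, hp]
      congr 1
      rw [hg]
      simp only [Polynomial.eval_add, Polynomial.eval_mul, Polynomial.eval_C, Polynomial.eval_X]
      ring
  -- exponential identity
  have hexp : ∀ (j : Fin m) (N : ℕ),
      Complex.exp (∑ k, lam j k * ((x k : ℂ) + (N : ℂ) * (h k : ℂ)))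
        = Complex.exp (∑ k, lam j k * (x k : ℂ)) *
            Complex.exp (∑ k, lam j k * (h k : ℂ)) ^ N := by
    intro j N
    have e1 : ∑ k, lam j k * ((x k : ℂ) + (N : ℂ) * (h k : ℂ))
        = (∑ k, lam j k * (x k : ℂ)) + (N : ℂ) * ∑ k, lam j k * (h k : ℂ) := by
      rw [Finset.mul_sum, ← Finset.sum_add_distrib]
      exact Finset.sum_congr rfl fun k _ => by ring
    rw [e1, Complex.exp_add, Complex.exp_nat_mul]
  -- the factorization
  set U : Matrix (Fin (m * (D + 1) + 1)) (Fin m × Fin (D + 1)) ℂ :=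
    Matrix.of fun i p => ((i : ℕ) : ℂ) ^ (p.2 : ℕ) *
      Complex.exp (∑ k, lam p.1 k * (h k : ℂ)) ^ (i : ℕ) with hU
  set V : Matrix (Fin m × Fin (D + 1)) (Fin (m * (D + 1) + 1)) ℂ :=
    Matrix.of fun p j' => (Polynomial.taylor ((j' : ℕ) : ℂ) (q p.1)).coeff (p.2 : ℕ) *
      Complex.exp (∑ k, lam p.1 k * (x k : ℂ)) *
      Complex.exp (∑ k, lam p.1 k * (h k : ℂ)) ^ (j' : ℕ) with hV
  have hM : (Matrix.of fun i j : Fin (m * (D + 1) + 1) =>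
      f (x + ((i : ℕ) + (j : ℕ)) • h)) = U * V := by
    ext i j'
    rw [Matrix.mul_apply, Matrix.of_apply, hP, Fintype.sum_prod_type]
    have hxh : ∀ k, (((x + ((i : ℕ) + (j' : ℕ)) • h) k : ℝ) : ℂ)
        = (x k : ℂ) + ((((i : ℕ) + (j' : ℕ)) : ℕ) : ℂ) * (h k : ℂ) := by
      intro k
      simp only [Pi.add_apply, Pi.smul_apply]
      rw [nsmul_eq_mul]
      push_cast
      ring
    refine Finset.sum_congr rfl fun j _ => ?_
    simp only [hxh]
    rw [heval j ((i : ℕ) + (j' : ℕ)), hexp j ((i : ℕ) + (j' : ℕ))]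
    -- now handle the inner sum over b
    have h1 : ∑ b : Fin (D + 1),
        (Polynomial.taylor ((j' : ℕ) : ℂ) (q j)).coeff (b : ℕ) * ((i : ℕ) : ℂ) ^ (b : ℕ)
        = (Polynomial.taylor ((j' : ℕ) : ℂ) (q j)).eval ((i : ℕ) : ℂ) := by
      rw [Fin.sum_univ_eq_sum_range
        (fun b => (Polynomial.taylor ((j' : ℕ) : ℂ) (q j)).coeff b * ((i : ℕ) : ℂ) ^ b)]
      exact (Polynomial.eval_eq_sum_range'
        (lt_of_le_of_lt (by rw [Polynomial.natDegree_taylor]; exact hdeg j)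
          (Nat.lt_succ_self D)) _).symm
    have h2 : (Polynomial.taylor ((j' : ℕ) : ℂ) (q j)).eval ((i : ℕ) : ℂ)
        = (q j).eval (((((i : ℕ) + (j' : ℕ)) : ℕ)) : ℂ) := by
      rw [Polynomial.taylor_eval]
      push_cast
      ring_nf
    calc (q j).eval (((((i : ℕ) + (j' : ℕ)) : ℕ)) : ℂ) *
          (Complex.exp (∑ k, lam j k * (x k : ℂ)) *
            Complex.exp (∑ k, lam j k * (h k : ℂ)) ^ ((i : ℕ) + (j' : ℕ)))
        = (∑ b : Fin (D + 1),
            (Polynomial.taylor ((j' : ℕ) : ℂ) (q j)).coeff (b : ℕ) * ((i : ℕ) : ℂ) ^ (b : ℕ)) *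
          (Complex.exp (∑ k, lam j k * (x k : ℂ)) *
            (Complex.exp (∑ k, lam j k * (h k : ℂ)) ^ (i : ℕ) *
             Complex.exp (∑ k, lam j k * (h k : ℂ)) ^ (j' : ℕ))) := by
          rw [h1, h2, ← pow_add]
      _ = ∑ b : Fin (D + 1), U i (j, b) * V (j, b) j' := by
          rw [Finset.sum_mul]
          refine Finset.sum_congr rfl fun b _ => ?_
          rw [hU, hV]
          simp only [Matrix.of_apply]
          ring
  rw [show (Matrix.of fun i j : Fin (m * (D + 1) + 1) =>
      f (x + ((i : ℕ) + (j : ℕ)) • h)) = U * V from hM]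
  by_contra hne
  have hu : IsUnit (U * V) := (Matrix.isUnit_iff_isUnit_det _).mpr (isUnit_iff_ne_zero.mpr hne)
  have hr1 : (U * V).rank = m * (D + 1) + 1 := by
    rw [Matrix.rank_of_isUnit _ hu, Fintype.card_fin]
  have hr2 : (U * V).rank ≤ m * (D + 1) := by
    refine (Matrix.rank_mul_le_left U V).trans ?_
    have := Matrix.rank_le_card_width U
    simpa [Fintype.card_prod, Fintype.card_fin] using this
  omega
end

section
/- Let f : ℝ^d → ℂ be a continuous function such that the span of all its translates, τ(f) = span{τ_h(f) : h ∈ ℝ^d}, is finite-dimensional, say of dimension n. Then for every h ∈ ℝ^d there exist scalars a_0(h), a_1(h), ..., a_n(h) ∈ ℂ, not all zero, such that a_0(h)f(x) + a_1(h)f(x+h) + ... + a_n(h)f(x+nh) = 0 for all x ∈ ℝ^d; consequently f satisfies the Popoviciu–Ionescu functional equation of order n in ℝ^d: det[f(x + (i + j)h)]_{0 ≤ i, j ≤ n} = 0 for all x, h ∈ ℝ^d. -/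
open scoped BigOperators

/-- If the span of all translates of a continuous `f : ℝ^d → ℂ` is finite-dimensional of
dimension `n`, then for every `h` there is a nontrivial relation
`a₀(h) f(x) + ⋯ + aₙ(h) f(x+nh) = 0` for all `x`; consequently `f` satisfies the
Popoviciu–Ionescu functional equation of order `n` in `ℝ^d`. -/
theorem stmt_15 (d n : ℕ) (f : (Fin d → ℝ) → ℂ) (hf : Continuous f)
    (hfd : FiniteDimensional ℂ
      ↥(Submodule.span ℂ (Set.range fun h : Fin d → ℝ => fun x : Fin d → ℝ => f (x + h))))
    (hrank : Module.finrank ℂ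
      ↥(Submodule.span ℂ (Set.range fun h : Fin d → ℝ => fun x : Fin d → ℝ => f (x + h)))
      = n) :
    (∀ h : Fin d → ℝ, ∃ a : Fin (n + 1) → ℂ, a ≠ 0 ∧
      ∀ x : Fin d → ℝ, ∑ k : Fin (n + 1), a k * f (x + (k : ℕ) • h) = 0) ∧
    ∀ x h : Fin d → ℝ,
      Matrix.det (Matrix.of fun i j : Fin (n + 1) =>
        f (x + ((i : ℕ) + (j : ℕ)) • h)) = 0 := by
  set S := Submodule.span ℂ
    (Set.range fun h : Fin d → ℝ => fun x : Fin d → ℝ => f (x + h)) with hS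
  have key : ∀ h : Fin d → ℝ, ∃ a : Fin (n + 1) → ℂ, a ≠ 0 ∧
      ∀ x : Fin d → ℝ, ∑ k : Fin (n + 1), a k * f (x + (k : ℕ) • h) = 0 := by
    intro h
    have hmem : ∀ k : Fin (n + 1), (fun x : Fin d → ℝ => f (x + (k : ℕ) • h)) ∈ S := by
      intro k
      exact Submodule.subset_span ⟨(k : ℕ) • h, rfl⟩
    set v : Fin (n + 1) → S := fun k => ⟨_, hmem k⟩ with hv
    have hnli : ¬ LinearIndependent ℂ v := by
      intro hli
      have := hli.fintype_card_le_finrank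
      simp [hrank] at this
    rw [Fintype.not_linearIndependent_iff] at hnli
    obtain ⟨a, hsum, i, hi⟩ := hnli
    refine ⟨a, fun h0 => hi (by simp [h0]), fun x => ?_⟩
    have := congrArg (fun g : S => (g : (Fin d → ℝ) → ℂ) x) hsum
    simpa [v, Finset.sum_apply, smul_eq_mul] using this
  refine ⟨key, fun x h => ?_⟩
  obtain ⟨a, ha0, ha⟩ := key h
  rw [← Matrix.exists_vecMul_eq_zero_iff]
  refine ⟨a, ha0, ?_⟩
  funext j
  have := ha (x + (j : ℕ) • h)
  simp only [Matrix.vecMul, dotProduct, Matrix.of_apply, Pi.zero_apply]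
  rw [← this]
  congr 1
  funext k
  congr 2
  rw [add_smul]
  abel
end
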